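/- Let k ∈ ℝ⁴ with η(k,k) = ε where ε = 1 or ε = -1, let R₀ ∈ ℝ with R₀ ≠ 0, write k_a for the lowered covector of k, and define R_{abcd} = (R₀/3)(η_{a[c}η_{d]b} - ε η_{a[c}k_{d]}k_b - ε k_a k_{[c}η_{d]b}). Then the linear map on the 6-dimensional space of bivectors given by F ↦ (a, b ↦ Σ_{c,d} R_{abcd} F^{cd}) has kernel equal to the 3-dimensional subspace of simple bivectors of the form k♭ ∧ m = (a, b ↦ k_a m_b - k_b m_a) for covectors m : Fin 4 → ℝ, and hence has rank exactly 3. -/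

import Mathlib

/-- The Minkowski metric `η = diag(-1,1,1,1)` on `ℝ⁴` (its own inverse). -/
def eta (a b : Fin 4) : ℝ := if a = b then (if a = 0 then -1 else 1) else 0

/-- The lowered covector `v_a = η_{ab} v^b` of a vector `v`. -/
def lower (v : Fin 4 → ℝ) (a : Fin 4) : ℝ := ∑ b : Fin 4, eta a b * v b

/-- The Minkowski inner product of signature `(-,+,+,+)`. -/
def minkowski (v w : Fin 4 → ℝ) : ℝ :=
  -(v 0 * w 0) + v 1 * w 1 + v 2 * w 2 + v 3 * w 3

/-- The 6-dimensional space of bivectors (antisymmetric 4×4 arrays) on `ℝ⁴`. -/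
def Biv : Submodule ℝ (Fin 4 → Fin 4 → ℝ) where
  carrier := {F | ∀ a b, F a b = -F b a}
  add_mem' := by
    intro F G hF hG a b
    simp only [Pi.add_apply]
    rw [hF a b, hG a b]; ring
  zero_mem' := by intro a b; simp
  smul_mem' := by
    intro c F hF a b
    simp only [Pi.smul_apply, smul_eq_mul]
    rw [hF a b]; ring

def curvMap (R : Fin 4 → Fin 4 → Fin 4 → Fin 4 → ℝ) : Biv →ₗ[ℝ] (Fin 4 → Fin 4 → ℝ) where
  toFun F := fun a b => ∑ c : Fin 4, ∑ d : Fin 4,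
      R a b c d * (∑ e : Fin 4, ∑ f : Fin 4,
        eta c e * eta d f * (F : Fin 4 → Fin 4 → ℝ) e f)
  map_add' F G := by
    funext a b
    simp only [Submodule.coe_add, Pi.add_apply, Fin.sum_univ_four]
    ring
  map_smul' r F := by
    funext a b
    simp only [SetLike.val_smul, Pi.smul_apply, smul_eq_mul, RingHom.id_apply, Fin.sum_univ_four]
    ring

lemma fin4_cases : ∀ a : Fin 4, a = 0 ∨ a = 1 ∨ a = 2 ∨ a = 3 := by decide

lemma lower_vals (k : Fin 4 → ℝ) : lower k 0 = -k 0 ∧ lower k 1 = k 1 ∧ lower k 2 = k 2 ∧ lower k 3 = k 3 := by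
  refine ⟨?_,?_,?_,?_⟩ <;>
  · show (∑ b : Fin 4, eta _ b * k b) = _
    rw [Fin.sum_univ_four]
    norm_num [show eta 0 0 = -1 from rfl, show eta 1 1 = 1 from rfl, show eta 2 2 = 1 from rfl,
      show eta 3 3 = 1 from rfl, show eta 0 1 = 0 from rfl, show eta 0 2 = 0 from rfl,
      show eta 0 3 = 0 from rfl, show eta 1 0 = 0 from rfl, show eta 1 2 = 0 from rfl,
      show eta 1 3 = 0 from rfl, show eta 2 0 = 0 from rfl, show eta 2 1 = 0 from rfl,
      show eta 2 3 = 0 from rfl, show eta 3 0 = 0 from rfl, show eta 3 1 = 0 from rfl,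
      show eta 3 2 = 0 from rfl]

set_option maxHeartbeats 2000000 in
lemma curvMap_eval (k : Fin 4 → ℝ) (ε R₀ : ℝ)
    (R : Fin 4 → Fin 4 → Fin 4 → Fin 4 → ℝ)
    (hR : ∀ a b c d, R a b c d =
      (R₀ / 3) * ((eta a c * eta d b - eta a d * eta c b) / 2
        - ε * ((eta a c * lower k d - eta a d * lower k c) / 2) * lower k b
        - ε * lower k a * ((lower k c * eta d b - lower k d * eta c b) / 2)))
    (F : Biv) (a b : Fin 4) :
    curvMap R F a b = (R₀/3) * ((F : Fin 4 → Fin 4 → ℝ) a b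
      - ε * (∑ f : Fin 4, (F : Fin 4 → Fin 4 → ℝ) a f * k f) * lower k b
      + ε * lower k a * (∑ f : Fin 4, (F : Fin 4 → Fin 4 → ℝ) b f * k f)) := by
  obtain ⟨F, hF⟩ := F
  have hd : ∀ a, F a a = 0 := fun a => by have := hF a a; linarith
  have h10 : F 1 0 = -F 0 1 := hF 1 0
  have h20 : F 2 0 = -F 0 2 := hF 2 0
  have h30 : F 3 0 = -F 0 3 := hF 3 0
  have h21 : F 2 1 = -F 1 2 := hF 2 1
  have h31 : F 3 1 = -F 1 3 := hF 3 1
  have h32 : F 3 2 = -F 2 3 := hF 3 2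
  obtain ⟨l0,l1,l2,l3⟩ := lower_vals k
  rcases fin4_cases a with rfl|rfl|rfl|rfl <;> rcases fin4_cases b with rfl|rfl|rfl|rfl <;>
  · simp only [curvMap, LinearMap.coe_mk, AddHom.coe_mk, hR, Fin.sum_univ_four,
      show eta 0 0 = (-1:ℝ) from rfl, show eta 1 1 = (1:ℝ) from rfl, show eta 2 2 = (1:ℝ) from rfl,
      show eta 3 3 = (1:ℝ) from rfl, show eta 0 1 = (0:ℝ) from rfl, show eta 0 2 = (0:ℝ) from rfl,
      show eta 0 3 = (0:ℝ) from rfl, show eta 1 0 = (0:ℝ) from rfl, show eta 1 2 = (0:ℝ) from rfl,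
      show eta 1 3 = (0:ℝ) from rfl, show eta 2 0 = (0:ℝ) from rfl, show eta 2 1 = (0:ℝ) from rfl,
      show eta 2 3 = (0:ℝ) from rfl, show eta 3 0 = (0:ℝ) from rfl, show eta 3 1 = (0:ℝ) from rfl,
      show eta 3 2 = (0:ℝ) from rfl,
      l0,l1,l2,l3, hd, h10,h20,h30,h21,h31,h32,
      mul_zero, zero_mul, mul_one, one_mul, mul_neg, neg_mul, neg_neg, neg_zero,
      add_zero, zero_add, sub_zero, zero_sub, zero_div]
    ring

lemma sum_lower_mul (k : Fin 4 → ℝ) : ∑ f : Fin 4, lower k f * k f = minkowski k k := by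
  obtain ⟨l0,l1,l2,l3⟩ := lower_vals k
  rw [Fin.sum_univ_four, l0, l1, l2, l3, minkowski]; ring

/-- the simple bivector `k♭ ∧ m` as a linear map in `m`. -/
noncomputable def wedge (k : Fin 4 → ℝ) : (Fin 4 → ℝ) →ₗ[ℝ] Biv where
  toFun m := ⟨fun a b => lower k a * m b - lower k b * m a, fun a b => by ring⟩
  map_add' m n := by
    apply Subtype.ext; funext a b
    show lower k a * (m b + n b) - lower k b * (m a + n a) = _
    show _ = (lower k a * m b - lower k b * m a) + (lower k a * n b - lower k b * n a)
    ring
  map_smul' r m := by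
    apply Subtype.ext; funext a b
    show lower k a * (r * m b) - lower k b * (r * m a) = r * (lower k a * m b - lower k b * m a)
    ring

noncomputable def bivCoords : Biv →ₗ[ℝ] (Fin 6 → ℝ) where
  toFun F := ![(F : Fin 4 → Fin 4 → ℝ) 0 1, (F : Fin 4 → Fin 4 → ℝ) 0 2, (F : Fin 4 → Fin 4 → ℝ) 0 3,
    (F : Fin 4 → Fin 4 → ℝ) 1 2, (F : Fin 4 → Fin 4 → ℝ) 1 3, (F : Fin 4 → Fin 4 → ℝ) 2 3]
  map_add' F G := by funext i; fin_cases i <;> rfl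
  map_smul' r F := by funext i; fin_cases i <;> rfl

lemma fin6_cases : ∀ i : Fin 6, i = 0 ∨ i = 1 ∨ i = 2 ∨ i = 3 ∨ i = 4 ∨ i = 5 := by decide

def bivOfFun (v : Fin 6 → ℝ) : Fin 4 → Fin 4 → ℝ :=
  ![![0, v 0, v 1, v 2], ![-v 0, 0, v 3, v 4], ![-v 1, -v 3, 0, v 5], ![-v 2, -v 4, -v 5, 0]]

lemma bivOfFun_mem (v : Fin 6 → ℝ) : bivOfFun v ∈ Biv := by
  intro a b
  rcases fin4_cases a with rfl|rfl|rfl|rfl <;> rcases fin4_cases b with rfl|rfl|rfl|rfl <;>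
    simp [bivOfFun, Matrix.cons_val_zero, Matrix.cons_val_one, Matrix.head_cons]

noncomputable def bivOf : (Fin 6 → ℝ) →ₗ[ℝ] Biv where
  toFun v := ⟨bivOfFun v, bivOfFun_mem v⟩
  map_add' v w := by
    apply Subtype.ext; funext a b
    show bivOfFun (v + w) a b = (bivOfFun v + bivOfFun w) a b
    rcases fin4_cases a with rfl|rfl|rfl|rfl <;> rcases fin4_cases b with rfl|rfl|rfl|rfl <;>
      simp [bivOfFun, Matrix.cons_val_zero, Matrix.cons_val_one, Matrix.head_cons] <;> ring
  map_smul' r v := by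
    apply Subtype.ext; funext a b
    show bivOfFun (r • v) a b = (r • bivOfFun v) a b
    rcases fin4_cases a with rfl|rfl|rfl|rfl <;> rcases fin4_cases b with rfl|rfl|rfl|rfl <;>
      simp [bivOfFun, Matrix.cons_val_zero, Matrix.cons_val_one, Matrix.head_cons] <;> ring

noncomputable def bivEquiv : Biv ≃ₗ[ℝ] (Fin 6 → ℝ) :=
  LinearEquiv.ofLinear bivCoords bivOf
    (by
      apply LinearMap.ext; intro v; funext i
      rcases fin6_cases i with rfl|rfl|rfl|rfl|rfl|rfl <;> rfl)
    (by
      apply LinearMap.ext; intro F; apply Subtype.ext; funext a b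
      have hF := F.2
      have hd : ∀ a, (F : Fin 4 → Fin 4 → ℝ) a a = 0 := fun a => by have := hF a a; linarith
      rcases fin4_cases a with rfl|rfl|rfl|rfl <;> rcases fin4_cases b with rfl|rfl|rfl|rfl <;>
        simp [bivOf, bivCoords, hd, Matrix.cons_val_zero, Matrix.cons_val_one, Matrix.head_cons,
          bivOfFun, Matrix.cons_val_succ] <;>
        first | rfl | exact (hF _ _).symm)

lemma finrank_biv : Module.finrank ℝ Biv = 6 := by
  rw [bivEquiv.finrank_eq, Module.finrank_fin_fun]


/-- For the curvature tensor
`R_{abcd} = (R₀/3)(η_{a[c}η_{d]b} - ε η_{a[c}k_{d]}k_b - ε k_a k_{[c}η_{d]b})`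
with `R₀ ≠ 0` and `η(k,k) = ε = ±1`, the induced linear map on the 6-dimensional
bivector space, `F ↦ (a, b ↦ Σ_{c,d} R_{abcd} F^{cd})`, has kernel exactly the
3-dimensional subspace of simple bivectors `k♭ ∧ m`, and hence rank exactly 3. -/
theorem conformally_flat_curvature_rank_three
    (k : Fin 4 → ℝ) (ε : ℝ) (hε : ε = 1 ∨ ε = -1) (hk : minkowski k k = ε)
    (R₀ : ℝ) (hR₀ : R₀ ≠ 0)
    (R : Fin 4 → Fin 4 → Fin 4 → Fin 4 → ℝ)
    (hR : ∀ a b c d, R a b c d =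
      (R₀ / 3) * ((eta a c * eta d b - eta a d * eta c b) / 2
        - ε * ((eta a c * lower k d - eta a d * lower k c) / 2) * lower k b
        - ε * lower k a * ((lower k c * eta d b - lower k d * eta c b) / 2))) :
    ∃ L : Biv →ₗ[ℝ] (Fin 4 → Fin 4 → ℝ),
      (∀ F : Biv, ∀ a b : Fin 4, L F a b =
        ∑ c : Fin 4, ∑ d : Fin 4,
          R a b c d * (∑ e : Fin 4, ∑ f : Fin 4,
            eta c e * eta d f * (F : Fin 4 → Fin 4 → ℝ) e f)) ∧
      (∀ F : Biv, F ∈ LinearMap.ker L ↔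
        ∃ m : Fin 4 → ℝ, ∀ a b : Fin 4,
          (F : Fin 4 → Fin 4 → ℝ) a b = lower k a * m b - lower k b * m a) ∧
      Module.finrank ℝ (LinearMap.ker L) = 3 ∧
      Module.finrank ℝ (LinearMap.range L) = 3 := by
  have hε2 : ε * ε = 1 := by rcases hε with rfl | rfl <;> norm_num
  have hεne : ε ≠ 0 := by rcases hε with rfl | rfl <;> norm_num
  have hkl : ∑ f : Fin 4, lower k f * k f = ε := by rw [sum_lower_mul, hk]
  -- kernel characterization
  have hker : ∀ F : Biv, F ∈ LinearMap.ker (curvMap R) ↔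
      ∃ m : Fin 4 → ℝ, ∀ a b : Fin 4,
        (F : Fin 4 → Fin 4 → ℝ) a b = lower k a * m b - lower k b * m a := by
    intro F
    rw [LinearMap.mem_ker]
    constructor
    · intro h0
      refine ⟨fun b => -ε * ∑ f : Fin 4, (F : Fin 4 → Fin 4 → ℝ) b f * k f, fun a b => ?_⟩
      have h := congrFun (congrFun h0 a) b
      rw [curvMap_eval k ε R₀ R hR F a b] at h
      have h3 : (R₀ / 3) ≠ 0 := div_ne_zero hR₀ (by norm_num)
      have hX := (mul_eq_zero.mp (by simpa using h)).resolve_left h3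
      linear_combination hX
    · rintro ⟨m, hm⟩
      funext a b
      rw [curvMap_eval k ε R₀ R hR F a b]
      have hp : ∀ a : Fin 4, (∑ f : Fin 4, (F : Fin 4 → Fin 4 → ℝ) a f * k f)
          = lower k a * (∑ f : Fin 4, m f * k f) - ε * m a := by
        intro a
        have h4 := hkl
        rw [Fin.sum_univ_four] at h4
        simp only [hm]
        rw [Fin.sum_univ_four, Fin.sum_univ_four]
        linear_combination (-(m a)) * h4
      rw [hp a, hp b, hm a b]
      simp only [Pi.zero_apply]
      linear_combination (-(R₀/3) * (lower k a * m b - lower k b * m a)) * hε2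
  -- range of wedge is kernel
  have hWrange : LinearMap.range (wedge k) = LinearMap.ker (curvMap R) := by
    ext F
    rw [LinearMap.mem_range, hker F]
    constructor
    · rintro ⟨m, rfl⟩; exact ⟨m, fun a b => rfl⟩
    · rintro ⟨m, hm⟩
      exact ⟨m, Subtype.ext (funext fun a => funext fun b => (hm a b).symm)⟩
  -- a nonzero component of lower k
  have hKl : ∃ a₀, lower k a₀ ≠ 0 := by
    by_contra hcon
    push_neg at hcon
    rw [Fin.sum_univ_four, hcon 0, hcon 1, hcon 2, hcon 3] at hkl
    simp at hkl
    exact hεne hkl.symm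
  obtain ⟨a₀, ha₀⟩ := hKl
  have hlkne : lower k ≠ 0 := fun h => ha₀ (by rw [h]; rfl)
  -- kernel of wedge
  have hWker : LinearMap.ker (wedge k) = Submodule.span ℝ {lower k} := by
    ext m
    rw [LinearMap.mem_ker, Submodule.mem_span_singleton]
    constructor
    · intro h0
      refine ⟨m a₀ / lower k a₀, ?_⟩
      funext b
      have h := congrFun (congrFun (Subtype.ext_iff.mp h0) a₀) b
      simp only [wedge, LinearMap.coe_mk, AddHom.coe_mk, ZeroMemClass.coe_zero,
        Pi.zero_apply] at h
      simp only [Pi.smul_apply, smul_eq_mul]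
      field_simp
      linear_combination -h
    · rintro ⟨c, rfl⟩
      apply Subtype.ext; funext a b
      show lower k a * (c • lower k) b - lower k b * (c • lower k) a = 0
      simp only [Pi.smul_apply, smul_eq_mul]
      ring
  have hkerdim : Module.finrank ℝ (LinearMap.ker (curvMap R)) = 3 := by
    have h1 := LinearMap.finrank_range_add_finrank_ker (wedge k)
    rw [hWrange, hWker, Module.finrank_fin_fun, finrank_span_singleton hlkne] at h1
    omega
  refine ⟨curvMap R, fun F a b => rfl, hker, hkerdim, ?_⟩
  have h2 := LinearMap.finrank_range_add_finrank_ker (curvMap R)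
  rw [finrank_biv, hkerdim] at h2
  omega
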